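/- Let X ⊆ ℝⁿ be a nonempty compact subset, let T be a metric space, let c ≥ 0, and let f : X × T → ℝ be continuous and such that for every t ∈ T the map x ↦ f(x, t) is c-Lipschitz on X, with the constant c not depending on t. Define F : ℝⁿ × T → ℝ by F(z, t) = sup_{x ∈ X} (f(x, t) − c·‖x − z‖). Then F is continuous on ℝⁿ × T, F(x, t) = f(x, t) for all (x, t) ∈ X × T, and for every t ∈ T the map z ↦ F(z, t) is c-Lipschitz on ℝⁿ. -/

import Mathlib

open Set

private lemma aux_sSup_le {E : Type*} {g h : E → ℝ} {X : Set E} (hX : X.Nonempty)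
    (hh : BddAbove (h '' X)) {d : ℝ} (hd : ∀ x ∈ X, g x ≤ h x + d) :
    sSup (g '' X) ≤ sSup (h '' X) + d := by
  refine csSup_le (hX.image g) ?_
  rintro _ ⟨x, hx, rfl⟩
  exact (hd x hx).trans (add_le_add_left (le_csSup hh ⟨x, hx, rfl⟩) d)

private lemma aux_abs_sSup {E : Type*} {g h : E → ℝ} {X : Set E} (hX : X.Nonempty)
    (hg : BddAbove (g '' X)) (hh : BddAbove (h '' X)) {d : ℝ}
    (hd : ∀ x ∈ X, |g x - h x| ≤ d) : |sSup (g '' X) - sSup (h '' X)| ≤ d := by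
  rw [abs_sub_le_iff]
  constructor
  · rw [sub_le_iff_le_add, add_comm]
    exact aux_sSup_le hX hh fun x hx => by
      have := (abs_sub_le_iff.mp (hd x hx)).1; linarith
  · rw [sub_le_iff_le_add, add_comm]
    exact aux_sSup_le hX hg fun x hx => by
      have := (abs_sub_le_iff.mp (hd x hx)).2; linarith

/-- Uniform-in-`x` continuity in `t` of a jointly continuous function on a compact set. -/
private lemma aux_unif {E T : Type*} [MetricSpace E] [MetricSpace T] {X : Set E}
    (hXc : IsCompact X) (f : E × T → ℝ) (hf : ContinuousOn f (X ×ˢ (univ : Set T)))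
    (t₀ : T) {ε : ℝ} (hε : 0 < ε) :
    ∃ δ > 0, ∀ t : T, dist t t₀ < δ → ∀ x ∈ X, |f (x, t) - f (x, t₀)| ≤ ε := by
  have key : ∀ x ∈ X, ∃ δ > 0, ∀ p ∈ X ×ˢ (univ : Set T),
      dist p (x, t₀) < δ → |f p - f (x, t₀)| < ε / 2 := by
    intro x hx
    have hcw : ContinuousWithinAt f (X ×ˢ (univ : Set T)) (x, t₀) :=
      hf (x, t₀) ⟨hx, mem_univ _⟩
    rw [Metric.continuousWithinAt_iff] at hcw
    obtain ⟨δ, hδ, h⟩ := hcw (ε / 2) (by linarith)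
    exact ⟨δ, hδ, fun p hp hd => by rw [← Real.dist_eq]; exact h hp hd⟩
  choose! δ hδpos hδ using key
  obtain ⟨s, hsX, hcov⟩ := hXc.elim_nhds_subcover (fun x => Metric.ball x (δ x / 2))
    (fun x hx => Metric.ball_mem_nhds x (by linarith [hδpos x hx]))
  rcases s.eq_empty_or_nonempty with rfl | hs
  · refine ⟨1, one_pos, fun t _ x hx => ?_⟩
    simpa using hcov hx
  · refine ⟨s.inf' hs (fun x => δ x / 2), ?_, ?_⟩
    · exact (Finset.lt_inf'_iff hs).mpr fun x hx => by linarith [hδpos x (hsX x hx)]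
    · intro t ht x hx
      obtain ⟨x₀, hx₀s, hx₀⟩ := by simpa using hcov hx
      have hx₀X := hsX x₀ hx₀s
      have hδ0 := hδpos x₀ hx₀X
      have hts : dist t t₀ < δ x₀ / 2 :=
        lt_of_lt_of_le ht (Finset.inf'_le _ hx₀s)
      have h1 : |f (x, t) - f (x₀, t₀)| < ε / 2 := by
        refine hδ x₀ hx₀X (x, t) ⟨hx, mem_univ _⟩ ?_
        rw [Prod.dist_eq]
        exact max_lt (by linarith) (by linarith)
      have h2 : |f (x, t₀) - f (x₀, t₀)| < ε / 2 := by
        refine hδ x₀ hx₀X (x, t₀) ⟨hx, mem_univ _⟩ ?_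
        rw [Prod.dist_eq]
        exact max_lt (by linarith) (by simpa using hδ0)
      calc |f (x, t) - f (x, t₀)| ≤ |f (x, t) - f (x₀, t₀)| + |f (x, t₀) - f (x₀, t₀)| := by
            rw [abs_sub_comm (f (x, t₀))]; exact abs_sub_le _ _ _
        _ ≤ ε := by linarith

/-- **Parametrized McShane extension.** Let `X ⊆ ℝⁿ` be a nonempty compact set, `T` a
metric space, `c ≥ 0`, and `f : X × T → ℝ` continuous and `c`-Lipschitz in the first
variable, uniformly in `t ∈ T`. Then
`F (z, t) = sup_{x ∈ X} (f (x, t) - c·‖x - z‖)` is continuous on `ℝⁿ × T`, agrees with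
`f` on `X × T`, and for every `t` the map `z ↦ F (z, t)` is `c`-Lipschitz on `ℝⁿ`. -/
theorem mcshane_extension_with_parameters {n : ℕ} {T : Type*} [MetricSpace T]
    (X : Set (EuclideanSpace ℝ (Fin n))) (hX : X.Nonempty) (hXc : IsCompact X)
    (c : ℝ) (hc : 0 ≤ c) (f : EuclideanSpace ℝ (Fin n) × T → ℝ)
    (hfcont : ContinuousOn f (X ×ˢ (Set.univ : Set T)))
    (hflip : ∀ t : T, ∀ x ∈ X, ∀ y ∈ X, |f (x, t) - f (y, t)| ≤ c * ‖x - y‖) :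
    Continuous (fun zt : EuclideanSpace ℝ (Fin n) × T =>
      sSup ((fun x : EuclideanSpace ℝ (Fin n) => f (x, zt.2) - c * ‖x - zt.1‖) '' X)) ∧
    (∀ x ∈ X, ∀ t : T,
      sSup ((fun x' : EuclideanSpace ℝ (Fin n) => f (x', t) - c * ‖x' - x‖) '' X) =
        f (x, t)) ∧
    (∀ t : T, ∀ z w : EuclideanSpace ℝ (Fin n),
      |sSup ((fun x : EuclideanSpace ℝ (Fin n) => f (x, t) - c * ‖x - z‖) '' X) -
        sSup ((fun x : EuclideanSpace ℝ (Fin n) => f (x, t) - c * ‖x - w‖) '' X)| ≤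
        c * ‖z - w‖) := by
  -- continuity of `x ↦ f (x, t)` on `X`
  have hft : ∀ t : T, ContinuousOn (fun x => f (x, t)) X := by
    intro t
    exact hfcont.comp (continuous_id.prodMk continuous_const).continuousOn
      (fun x hx => ⟨hx, mem_univ _⟩)
  -- boundedness of the images
  have hbdd : ∀ (z : EuclideanSpace ℝ (Fin n)) (t : T),
      BddAbove ((fun x : EuclideanSpace ℝ (Fin n) => f (x, t) - c * ‖x - z‖) '' X) := by
    intro z t
    refine hXc.bddAbove_image ((hft t).sub ?_)
    exact (continuous_const.mul ((continuous_id.sub continuous_const).norm)).continuousOn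
  -- Lipschitz part
  have hlip : ∀ t : T, ∀ z w : EuclideanSpace ℝ (Fin n),
      |sSup ((fun x : EuclideanSpace ℝ (Fin n) => f (x, t) - c * ‖x - z‖) '' X) -
        sSup ((fun x : EuclideanSpace ℝ (Fin n) => f (x, t) - c * ‖x - w‖) '' X)| ≤
        c * ‖z - w‖ := by
    intro t z w
    rw [abs_sub_le_iff]
    constructor
    · rw [sub_le_iff_le_add, add_comm]
      refine aux_sSup_le hX (hbdd w t) fun x hx => ?_
      have h1 : ‖x - w‖ ≤ ‖x - z‖ + ‖z - w‖ := by
        simpa using norm_sub_le_norm_sub_add_norm_sub x z w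
      nlinarith [mul_le_mul_of_nonneg_left h1 hc]
    · rw [sub_le_iff_le_add, add_comm]
      refine aux_sSup_le hX (hbdd z t) fun x hx => ?_
      have h1 : ‖x - z‖ ≤ ‖x - w‖ + ‖w - z‖ := by
        simpa using norm_sub_le_norm_sub_add_norm_sub x w z
      have h2 : ‖w - z‖ = ‖z - w‖ := norm_sub_rev w z
      nlinarith [mul_le_mul_of_nonneg_left h1 hc]
  -- agreement part
  have hagree : ∀ x ∈ X, ∀ t : T,
      sSup ((fun x' : EuclideanSpace ℝ (Fin n) => f (x', t) - c * ‖x' - x‖) '' X) =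
        f (x, t) := by
    intro x hx t
    refine le_antisymm (csSup_le (hX.image _) ?_) ?_
    · rintro _ ⟨y, hy, rfl⟩
      have := (abs_sub_le_iff.mp (hflip t y hy x hx)).1
      show f (y, t) - c * ‖y - x‖ ≤ f (x, t)
      linarith
    · have h0 : f (x, t) - c * ‖x - x‖ = f (x, t) := by simp
      rw [← h0]
      exact le_csSup (hbdd x t) ⟨x, hx, rfl⟩
  refine ⟨?_, hagree, hlip⟩
  -- continuity
  rw [Metric.continuous_iff]
  rintro ⟨z₀, t₀⟩ ε hε
  obtain ⟨δ₁, hδ₁, hunif⟩ := aux_unif hXc f hfcont t₀ (show (0:ℝ) < ε / 3 by linarith)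
  refine ⟨min δ₁ (ε / (3 * (c + 1))), lt_min hδ₁ (by positivity), ?_⟩
  rintro ⟨z, t⟩ hzt
  rw [Prod.dist_eq] at hzt
  have hdz : dist z z₀ < ε / (3 * (c + 1)) :=
    (le_max_left _ _).trans_lt (hzt.trans_le (min_le_right _ _))
  have hdt : dist t t₀ < δ₁ :=
    (le_max_right _ _).trans_lt (hzt.trans_le (min_le_left _ _))
  have h1 : |sSup ((fun x : EuclideanSpace ℝ (Fin n) => f (x, t) - c * ‖x - z‖) '' X) -
      sSup ((fun x : EuclideanSpace ℝ (Fin n) => f (x, t) - c * ‖x - z₀‖) '' X)| ≤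
      c * ‖z - z₀‖ := hlip t z z₀
  have h2 : |sSup ((fun x : EuclideanSpace ℝ (Fin n) => f (x, t) - c * ‖x - z₀‖) '' X) -
      sSup ((fun x : EuclideanSpace ℝ (Fin n) => f (x, t₀) - c * ‖x - z₀‖) '' X)| ≤
      ε / 3 := by
    refine aux_abs_sSup hX (hbdd z₀ t) (hbdd z₀ t₀) fun x hx => ?_
    have := hunif t hdt x hx
    simpa using this
  have hnz : ‖z - z₀‖ = dist z z₀ := (dist_eq_norm z z₀).symm
  have hcz : c * ‖z - z₀‖ ≤ ε / 3 := by
    rw [hnz]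
    calc c * dist z z₀ ≤ c * (ε / (3 * (c + 1))) :=
          mul_le_mul_of_nonneg_left hdz.le hc
      _ ≤ ε / 3 := by
          rw [mul_comm, div_mul_eq_mul_div, div_le_div_iff₀ (by positivity) (by norm_num)]
          nlinarith
  have hfinal : |sSup ((fun x : EuclideanSpace ℝ (Fin n) => f (x, t) - c * ‖x - z‖) '' X) -
      sSup ((fun x : EuclideanSpace ℝ (Fin n) => f (x, t₀) - c * ‖x - z₀‖) '' X)|
      < ε := by
    calc |sSup ((fun x : EuclideanSpace ℝ (Fin n) => f (x, t) - c * ‖x - z‖) '' X) -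
        sSup ((fun x : EuclideanSpace ℝ (Fin n) => f (x, t₀) - c * ‖x - z₀‖) '' X)|
        ≤ |sSup ((fun x : EuclideanSpace ℝ (Fin n) => f (x, t) - c * ‖x - z‖) '' X) -
        sSup ((fun x : EuclideanSpace ℝ (Fin n) => f (x, t) - c * ‖x - z₀‖) '' X)| +
        |sSup ((fun x : EuclideanSpace ℝ (Fin n) => f (x, t) - c * ‖x - z₀‖) '' X) -
        sSup ((fun x : EuclideanSpace ℝ (Fin n) => f (x, t₀) - c * ‖x - z₀‖) '' X)| :=
          abs_sub_le _ _ _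
      _ < ε := by linarith
  simpa [Real.dist_eq] using hfinal
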